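/- Let X ⊆ Grass^r(V) be a subset whose Plücker image is a projective line in ℙ(Λ^r V), and let L₁, L₂ be two distinct points of X. Then X = {L : L₁∩L₂ ⊆ L ⊆ L₁+L₂, dim L = r} = Grass¹((L₁+L₂)/(L₁∩L₂)) (pulled back), and the subspaces L₁+L₂ and L₁∩L₂ are independent of the choice of the two distinct points L₁, L₂ ∈ X. -/

import Mathlib

open Module Classical

/-- The Plücker vector `ω(L) = l₁ ∧ ... ∧ lᵣ` of an `r`-dimensional subspace `L`, for a
choice of basis `l₁, ..., lᵣ` of `L` (well defined up to a nonzero scalar). -/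
noncomputable def plueckerVec {k V : Type*} [Field k] [AddCommGroup V] [Module k V]
    (r : ℕ) (L : Submodule k V) : ExteriorAlgebra k V :=
  if h : Nonempty (Basis (Fin r) k ↥L) then
    ExteriorAlgebra.ιMulti k r (fun i => (h.some i : V)) else 0


section helpers

variable {k V : Type*} [Field k] [AddCommGroup V] [Module k V]

/-- contraction on the exterior algebra -/
noncomputable def ctr (f : Module.Dual k V) :
    ExteriorAlgebra k V →ₗ[k] ExteriorAlgebra k V :=
  CliffordAlgebra.contractLeft f

lemma ctr_ι_mul (f : Module.Dual k V) (a : V) (b : ExteriorAlgebra k V) :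
    ctr f (ExteriorAlgebra.ι k a * b) = f a • b - ExteriorAlgebra.ι k a * ctr f b :=
  CliffordAlgebra.contractLeft_ι_mul _ _ _

lemma ctr_one (f : Module.Dual k V) : ctr f (1 : ExteriorAlgebra k V) = 0 := by
  unfold ctr
  rw [show (1 : ExteriorAlgebra k V) = algebraMap k _ 1 by simp,
    CliffordAlgebra.contractLeft_algebraMap]

lemma ctr_kill (f : Module.Dual k V) {n : ℕ} (v : Fin n → V) (h : ∀ i, f (v i) = 0) :
    ctr f (ExteriorAlgebra.ιMulti k n v) = 0 := by
  induction n with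
  | zero => rw [ExteriorAlgebra.ιMulti_zero_apply]; exact ctr_one f
  | succ m ih =>
      rw [ExteriorAlgebra.ιMulti_succ_apply, ctr_ι_mul, h 0,
        ih (Matrix.vecTail v) (fun i => h i.succ)]
      simp

end helpers

section helpers2

variable {k V : Type*} [Field k] [AddCommGroup V] [Module k V]

lemma ιMulti_ne_zero {n : ℕ} {v : Fin n → V} (hv : LinearIndependent k v) :
    ExteriorAlgebra.ιMulti k n v ≠ 0 := by
  classical
  set S := Submodule.span k (Set.range v) with hS
  obtain ⟨C, hC⟩ := Submodule.exists_isCompl S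
  let π : V →ₗ[k] S := Submodule.projectionOnto S C hC
  let b : Basis (Fin n) k S := Basis.span hv
  let F : V [⋀^Fin n]→ₗ[k] k := (b.det).compLinearMap π
  let fam : ∀ i, V [⋀^Fin i]→ₗ[k] k := fun i =>
    if h : i = n then h ▸ F else 0
  intro h0
  have h1 : ExteriorAlgebra.liftAlternating (R := k) (M := V) (N := k) fam
      (ExteriorAlgebra.ιMulti k n v) = F v := by
    rw [ExteriorAlgebra.liftAlternating_apply_ιMulti]
    simp only [fam, dif_pos rfl]
  have h2 : F v = 1 := by
    have : (fun i => π (v i)) = b := by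
      funext i
      apply Subtype.ext
      have hv1 : v i ∈ S := Submodule.subset_span ⟨i, rfl⟩
      have := Submodule.linearProjOfIsCompl_apply_left hC ⟨v i, hv1⟩
      simp only [π, this]
      rw [Basis.span_apply]
    show b.det (fun i => π (v i)) = 1
    rw [this, Basis.det_self]

  rw [h0, map_zero] at h1
  rw [h2] at h1
  exact one_ne_zero h1.symm

lemma ι_mul_ιMulti_eq_zero_iff {n : ℕ} {s : Fin n → V} (hs : LinearIndependent k s)
    (x : V) : ExteriorAlgebra.ι k x * ExteriorAlgebra.ιMulti k n s = 0 ↔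
      x ∈ Submodule.span k (Set.range s) := by
  constructor
  · intro h
    by_contra hx
    have hcons : LinearIndependent k (Fin.cons x s : Fin (n+1) → V) :=
      linearIndependent_fin_cons.2 ⟨hs, hx⟩
    have := ιMulti_ne_zero hcons
    apply this
    rw [ExteriorAlgebra.ιMulti_succ_apply]
    simpa [Matrix.vecTail] using h
  · intro hx
    rw [Submodule.mem_span_range_iff_exists_fun] at hx
    obtain ⟨c, hc⟩ := hx
    rw [← hc]
    rw [map_sum]
    rw [Finset.sum_mul]
    apply Finset.sum_eq_zero
    intro i _
    rw [map_smul, smul_mul_assoc]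
    have : ExteriorAlgebra.ι k (s i) * ExteriorAlgebra.ιMulti k n s
        = ExteriorAlgebra.ιMulti k (n+1) (Fin.cons (s i) s) := by
      have e : (Fin.cons (s i) s ∘ Fin.succ : Fin n → V) = s := by
        funext j; simp
      rw [ExteriorAlgebra.ιMulti_succ_apply, Fin.cons_zero]
      show _ = _ * ExteriorAlgebra.ιMulti k n (Fin.cons (s i) s ∘ Fin.succ)
      rw [e]
    rw [this, AlternatingMap.map_eq_zero_of_eq _ _ (i := 0) (j := i.succ)
      (by simp) (Fin.succ_ne_zero i).symm, smul_zero]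

end helpers2

section helpers3

variable {k V : Type*} [Field k] [AddCommGroup V] [Module k V]

lemma alternating_eq_det_smul {r : ℕ} {L : Submodule k V} (b : Basis (Fin r) k L)
    (x : Fin r → L) :
    (ExteriorAlgebra.ιMulti k r).compLinearMap L.subtype x =
      b.det x • (ExteriorAlgebra.ιMulti k r).compLinearMap L.subtype b := by
  classical
  set G := (ExteriorAlgebra.ιMulti k r).compLinearMap L.subtype with hG
  set g := (LinearMap.toSpanSingleton k _ (G b)).compAlternatingMap b.det with hg
  have hGg : G = g := by
    apply Basis.ext_alternating b
    intro v hv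
    have hbij : Function.Bijective v := (Finite.injective_iff_bijective).1 hv
    set σ := Equiv.ofBijective v hbij with hσ
    have hσ' : (fun i => b (v i)) = b ∘ σ := rfl
    rw [hσ']
    have h1 : G (⇑b ∘ ⇑σ) = Equiv.Perm.sign σ • G b := AlternatingMap.map_perm G b σ
    have h2 : b.det (⇑b ∘ ⇑σ) = Equiv.Perm.sign σ • b.det b := AlternatingMap.map_perm b.det b σ
    rw [h1]
    show _ = LinearMap.toSpanSingleton k _ (G b) (b.det (⇑b ∘ ⇑σ))
    rw [h2, Basis.det_self, LinearMap.toSpanSingleton_apply, Units.smul_def,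
      Units.smul_def, Int.smul_one_eq_cast, Int.cast_smul_eq_zsmul]
  conv_lhs => rw [hGg]
  rfl

lemma ιMulti_basis_change {r : ℕ} {L : Submodule k V} (b b' : Basis (Fin r) k L) :
    ∃ c : k, c ≠ 0 ∧ ExteriorAlgebra.ιMulti k r (fun i => (b' i : V)) =
      c • ExteriorAlgebra.ιMulti k r (fun i => (b i : V)) := by
  refine ⟨b.det b', ?_, ?_⟩
  · exact (b.isUnit_det b').ne_zero
  · have := alternating_eq_det_smul b (fun i => b' i)
    simpa using this

end helpers3

section pluecker

variable {k V : Type*} [Field k] [AddCommGroup V] [Module k V]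

lemma pluecker_eq_smul_ιMulti {r : ℕ} {L : Submodule k V} {w : Fin r → V}
    (hw : LinearIndependent k w) (hsp : Submodule.span k (Set.range w) = L) :
    ∃ c : k, c ≠ 0 ∧ plueckerVec r L = c • ExteriorAlgebra.ιMulti k r w := by
  have hwL : ∀ i, w i ∈ L := fun i => hsp ▸ Submodule.subset_span ⟨i, rfl⟩
  let w' : Fin r → L := fun i => ⟨w i, hwL i⟩
  have hw2 : LinearIndependent k (L.subtype ∘ w') := hw
  have hw' : LinearIndependent k w' := hw2.of_comp L.subtype
  have hsp' : Submodule.span k (Set.range w') = ⊤ := by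
    apply Submodule.map_injective_of_injective L.injective_subtype
    rw [Submodule.map_span, Submodule.map_top, Submodule.range_subtype, ← Set.range_comp]
    exact hsp
  let b : Basis (Fin r) k L := Basis.mk hw' hsp'.ge
  have hb : (fun i => (b i : V)) = w := by
    funext i
    simp only [b, Basis.mk_apply]
    rfl
  have hne : Nonempty (Basis (Fin r) k ↥L) := ⟨b⟩
  rw [plueckerVec, dif_pos hne]
  obtain ⟨c, hc, hcc⟩ := ιMulti_basis_change b hne.some
  exact ⟨c, hc, by rw [hcc, hb]⟩

variable [FiniteDimensional k V]

lemma exists_pluecker_family {r : ℕ} {L : Submodule k V} (hL : finrank k ↥L = r) :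
    ∃ w : Fin r → V, LinearIndependent k w ∧ Submodule.span k (Set.range w) = L ∧
      ∃ c : k, c ≠ 0 ∧ plueckerVec r L = c • ExteriorAlgebra.ιMulti k r w := by
  let b : Basis (Fin r) k L := Module.finBasisOfFinrankEq k L hL
  refine ⟨fun i => (b i : V), b.linearIndependent.map' L.subtype L.ker_subtype, ?_, ?_⟩
  · show Submodule.span k (Set.range (L.subtype ∘ b)) = L
    rw [Set.range_comp, ← Submodule.map_span, b.span_eq, Submodule.map_top,
      Submodule.range_subtype]
  · exact pluecker_eq_smul_ιMulti (b.linearIndependent.map' L.subtype L.ker_subtype)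
      (by rw [show Set.range (fun i => (b i : V)) = Set.range (L.subtype ∘ b) from rfl,
        Set.range_comp, ← Submodule.map_span, b.span_eq, Submodule.map_top,
        Submodule.range_subtype])

lemma pluecker_ne_zero {r : ℕ} {L : Submodule k V} (hL : finrank k ↥L = r) :
    plueckerVec r L ≠ 0 := by
  obtain ⟨w, hw, -, c, hc, hp⟩ := exists_pluecker_family hL
  rw [hp]
  exact smul_ne_zero hc (ιMulti_ne_zero hw)

lemma ι_mul_pluecker_eq_zero_iff {r : ℕ} {L : Submodule k V} (hL : finrank k ↥L = r)
    (x : V) : ExteriorAlgebra.ι k x * plueckerVec r L = 0 ↔ x ∈ L := by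
  obtain ⟨w, hw, hsp, c, hc, hp⟩ := exists_pluecker_family hL
  rw [hp, mul_smul_comm, smul_eq_zero_iff_right hc, ι_mul_ιMulti_eq_zero_iff hw, hsp]

lemma ctr_pluecker_eq_zero {r : ℕ} {L : Submodule k V} (hL : finrank k ↥L = r)
    (f : Module.Dual k V) (hf : ∀ y ∈ L, f y = 0) :
    ctr f (plueckerVec r L) = 0 := by
  obtain ⟨w, hw, hsp, c, hc, hp⟩ := exists_pluecker_family hL
  rw [hp, map_smul, ctr_kill f w
    (fun i => hf _ (hsp ▸ Submodule.subset_span ⟨i, rfl⟩)), smul_zero]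

lemma pluecker_inj {r : ℕ} {L L' : Submodule k V} (hL : finrank k ↥L = r)
    (hL' : finrank k ↥L' = r) {c : k} (hc : c ≠ 0)
    (h : plueckerVec r L' = c • plueckerVec r L) : L' = L := by
  ext x
  rw [← ι_mul_pluecker_eq_zero_iff hL x, ← ι_mul_pluecker_eq_zero_iff hL' x, h,
    mul_smul_comm, smul_eq_zero_iff_right hc]

end pluecker

section helpers4

variable {k V : Type*} [Field k] [AddCommGroup V] [Module k V]

lemma basis_family {r : ℕ} {L : Submodule k V} (b : Basis (Fin r) k L) :
    LinearIndependent k (fun i => (b i : V)) ∧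
      Submodule.span k (Set.range (fun i => (b i : V))) = L :=
  ⟨b.linearIndependent.map' L.subtype L.ker_subtype, by
    rw [show Set.range (fun i => (b i : V)) = Set.range (L.subtype ∘ b) from rfl,
      Set.range_comp, ← Submodule.map_span, b.span_eq, Submodule.map_top,
      Submodule.range_subtype]⟩

variable [FiniteDimensional k V]

lemma exists_dual_fun {P : Submodule k V} {x : V} (hx : x ∉ P) :
    ∃ f : Module.Dual k V, f x = 1 ∧ ∀ y ∈ P, f y = 0 := by
  obtain ⟨f, hf0, hfP⟩ := P.exists_dual_map_eq_bot_of_notMem hx inferInstance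
  refine ⟨(f x)⁻¹ • f, by simp [inv_mul_cancel₀ hf0], fun y hy => ?_⟩
  have h : f y ∈ P.map f := ⟨y, hy, rfl⟩
  rw [hfP] at h
  simp only [Submodule.mem_bot] at h
  simp [h]

lemma span_eq_of_le {r : ℕ} {L : Submodule k V} {w : Fin r → V}
    (hw : LinearIndependent k w) (hle : ∀ i, w i ∈ L) (hrL : finrank k ↥L = r) :
    Submodule.span k (Set.range w) = L := by
  apply Submodule.eq_of_le_of_finrank_le
  · rw [Submodule.span_le]
    rintro x ⟨i, rfl⟩
    exact hle i
  · rw [hrL, finrank_span_eq_card hw, Fintype.card_fin]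

end helpers4

lemma ιMulti_cons {k V : Type*} [Field k] [AddCommGroup V] [Module k V]
    {m : ℕ} (y : V) (z : Fin m → V) :
    ExteriorAlgebra.ιMulti k (m+1) (Fin.cons y z) =
      ExteriorAlgebra.ι k y * ExteriorAlgebra.ιMulti k m z := by
  rw [ExteriorAlgebra.ιMulti_succ_apply]
  have h : Matrix.vecTail (Fin.cons y z : Fin (m+1) → V) = z := by
    funext j
    simp [Matrix.vecTail]
  rw [show (Fin.cons y z : Fin (m+1) → V) 0 = y from rfl, h]

set_option maxHeartbeats 2000000 in
theorem core {k V : Type*} [Field k] [AddCommGroup V] [Module k V]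
    [FiniteDimensional k V] (r : ℕ) (hr : 1 ≤ r) (X : Set (Submodule k V))
    (hX : ∀ L ∈ X, finrank k ↥L = r)
    (hline : ∃ W : Submodule k (ExteriorAlgebra k V), finrank k ↥W = 2 ∧
      W ≤ ⋀[k]^r V ∧ (∀ L ∈ X, plueckerVec r L ∈ W) ∧
      (∀ w ∈ W, w ≠ 0 → ∃ L ∈ X, ∃ c : k, c ≠ 0 ∧ plueckerVec r L = c • w))
    (L₁ L₂ : Submodule k V) (h₁ : L₁ ∈ X) (h₂ : L₂ ∈ X) (h12 : L₁ ≠ L₂) :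
    finrank k ↥(L₁ ⊓ L₂) + 1 = r ∧
    X = {L : Submodule k V | L₁ ⊓ L₂ ≤ L ∧ L ≤ L₁ ⊔ L₂ ∧ finrank k ↥L = r} := by
  classical
  obtain ⟨W, hW2, hWpow, hWmem, hWsurj⟩ := hline
  have hWfd : FiniteDimensional k W := FiniteDimensional.of_finrank_eq_succ hW2
  set N := L₁ ⊓ L₂ with hNdef
  have hr₁ : finrank k ↥L₁ = r := hX L₁ h₁
  have hr₂ : finrank k ↥L₂ = r := hX L₂ h₂
  set ω₁ := plueckerVec r L₁ with hω₁def
  set ω₂ := plueckerVec r L₂ with hω₂def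
  have hω₁ : ω₁ ≠ 0 := pluecker_ne_zero hr₁
  have hω₂ : ω₂ ≠ 0 := pluecker_ne_zero hr₂
  -- ω₁, ω₂ are linearly independent
  have hind : LinearIndependent k ![ω₁, ω₂] := by
    rw [LinearIndependent.pair_iff' hω₁]
    intro a ha
    have ha0 : a ≠ 0 := by
      rintro rfl
      rw [zero_smul] at ha
      exact hω₂ ha.symm
    exact h12 (pluecker_inj hr₁ hr₂ ha0 ha.symm).symm
  -- W is the span of ω₁, ω₂
  have hWspan : W = Submodule.span k {ω₁, ω₂} := by
    have hle : Submodule.span k {ω₁, ω₂} ≤ W := by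
      rw [Submodule.span_le]
      rintro z hz
      rcases Set.mem_insert_iff.1 hz with rfl | hz
      · exact hWmem L₁ h₁
      · rw [Set.mem_singleton_iff] at hz
        subst hz
        exact hWmem L₂ h₂
    have hfr : finrank k ↥(Submodule.span k ({ω₁, ω₂} : Set (ExteriorAlgebra k V))) = 2 := by
      have hrange : Set.range ![ω₁, ω₂] = {ω₁, ω₂} := by
        simp [Matrix.range_cons, Matrix.range_empty, Set.pair_comm]
      rw [← hrange, finrank_span_eq_card hind, Fintype.card_fin]
    exact (Submodule.eq_of_le_of_finrank_le hle (by rw [hfr, hW2])).symm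
  have hmemW : ∀ w ∈ W, ∃ a b : k, w = a • ω₁ + b • ω₂ := by
    intro w hw
    rw [hWspan, Submodule.mem_span_pair] at hw
    obtain ⟨a, b, h⟩ := hw
    exact ⟨a, b, h.symm⟩
  -- forward inclusion
  have hforward : ∀ L ∈ X, N ≤ L ∧ L ≤ L₁ ⊔ L₂ := by
    intro L hL
    have hrL := hX L hL
    obtain ⟨a, b, hab⟩ := hmemW _ (hWmem L hL)
    constructor
    · intro v hv
      obtain ⟨hv₁, hv₂⟩ := Submodule.mem_inf.1 hv
      rw [← ι_mul_pluecker_eq_zero_iff hrL v, hab, mul_add, mul_smul_comm, mul_smul_comm,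
        (ι_mul_pluecker_eq_zero_iff hr₁ v).2 hv₁, (ι_mul_pluecker_eq_zero_iff hr₂ v).2 hv₂,
        smul_zero, smul_zero, add_zero]
    · intro v hv
      by_contra hvU
      obtain ⟨f, hfx, hfP⟩ := exists_dual_fun hvU
      have h0 : ExteriorAlgebra.ι k v * plueckerVec r L = 0 :=
        (ι_mul_pluecker_eq_zero_iff hrL v).2 hv
      have hctr : ctr f (ExteriorAlgebra.ι k v * plueckerVec r L) = 0 := by
        rw [h0, map_zero]
      have hc1 : ctr f (plueckerVec r L) = 0 := by
        rw [hab, map_add, map_smul, map_smul,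
          ctr_pluecker_eq_zero hr₁ f (fun y hy => hfP y ((le_sup_left : L₁ ≤ L₁ ⊔ L₂) hy)),
          ctr_pluecker_eq_zero hr₂ f (fun y hy => hfP y ((le_sup_right : L₂ ≤ L₁ ⊔ L₂) hy)),
          smul_zero, smul_zero, add_zero]
      rw [ctr_ι_mul, hfx, one_smul, hc1, mul_zero, sub_zero] at hctr
      exact pluecker_ne_zero hrL hctr
  -- N is a proper subspace of L₁ and of L₂
  have hNne : N ≠ L₁ := by
    intro h
    have hle : L₁ ≤ L₂ := h ▸ inf_le_right
    exact h12 (Submodule.eq_of_le_of_finrank_le hle (by rw [hr₁, hr₂]))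
  have hNne₂ : N ≠ L₂ := by
    intro h
    have hle : L₂ ≤ L₁ := h ▸ inf_le_left
    exact h12 (Submodule.eq_of_le_of_finrank_le hle (by rw [hr₁, hr₂])).symm
  have hNlt : finrank k ↥N < r := by
    rw [← hr₁]
    exact Submodule.finrank_lt_finrank_of_lt (lt_of_le_of_ne inf_le_left hNne)
  -- the key dimension fact
  have hmain : ¬ (finrank k ↥N + 2 ≤ r) := by
    intro hd2
    have hw12 : ω₁ + ω₂ ∈ W := W.add_mem (hWmem _ h₁) (hWmem _ h₂)
    have hw120 : ω₁ + ω₂ ≠ 0 := by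
      intro h
      have := (LinearIndependent.pair_iff.1 hind 1 1 (by simpa using h)).1
      exact one_ne_zero this
    obtain ⟨L₃, hL₃X, c, hc, hpl₃⟩ := hWsurj _ hw12 hw120
    have hr₃ := hX L₃ hL₃X
    have hv3 : ∀ v ∈ L₃, ExteriorAlgebra.ι k v * ω₁ + ExteriorAlgebra.ι k v * ω₂ = 0 := by
      intro v hv
      have h0 : ExteriorAlgebra.ι k v * plueckerVec r L₃ = 0 :=
        (ι_mul_pluecker_eq_zero_iff hr₃ v).2 hv
      rw [hpl₃, mul_smul_comm, smul_eq_zero_iff_right hc, mul_add] at h0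
      exact h0
    have h31 : L₃ ⊓ L₁ ≤ N := by
      intro v hv
      obtain ⟨hv₃, hv₁⟩ := Submodule.mem_inf.1 hv
      have e1 : ExteriorAlgebra.ι k v * ω₁ = 0 := (ι_mul_pluecker_eq_zero_iff hr₁ v).2 hv₁
      have e2 : ExteriorAlgebra.ι k v * ω₂ = 0 := by
        have := hv3 v hv₃
        rw [e1, zero_add] at this
        exact this
      exact Submodule.mem_inf.2 ⟨hv₁, (ι_mul_pluecker_eq_zero_iff hr₂ v).1 e2⟩
    have h32 : L₃ ⊓ L₂ ≤ N := by
      intro v hv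
      obtain ⟨hv₃, hv₂⟩ := Submodule.mem_inf.1 hv
      have e2 : ExteriorAlgebra.ι k v * ω₂ = 0 := (ι_mul_pluecker_eq_zero_iff hr₂ v).2 hv₂
      have e1 : ExteriorAlgebra.ι k v * ω₁ = 0 := by
        have := hv3 v hv₃
        rw [e2, add_zero] at this
        exact this
      exact Submodule.mem_inf.2 ⟨(ι_mul_pluecker_eq_zero_iff hr₁ v).1 e1, hv₂⟩
    -- L₃ is not contained in L₁ nor L₂
    have hn31 : ¬ L₃ ≤ L₁ := by
      intro hle
      have hsub : L₃ ≤ N := fun v hv => h31 (Submodule.mem_inf.2 ⟨hv, hle hv⟩)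
      have := Submodule.finrank_mono hsub
      omega
    have hn32 : ¬ L₃ ≤ L₂ := by
      intro hle
      have hsub : L₃ ≤ N := fun v hv => h32 (Submodule.mem_inf.2 ⟨hv, hle hv⟩)
      have := Submodule.finrank_mono hsub
      omega
    obtain ⟨x, hx₃, hx₁⟩ := SetLike.not_le_iff_exists.1 hn31
    obtain ⟨y, hy₃, hy₂⟩ := SetLike.not_le_iff_exists.1 hn32
    -- find v₀ ∈ L₃ outside L₁ ∪ L₂
    obtain ⟨v₀, hv₀₃, hv₀₁, hv₀₂⟩ : ∃ v₀ ∈ L₃, v₀ ∉ L₁ ∧ v₀ ∉ L₂ := by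
      by_cases hx₂ : x ∈ L₂
      · by_cases hy₁ : y ∈ L₁
        · refine ⟨x + y, L₃.add_mem hx₃ hy₃, ?_, ?_⟩
          · intro h
            exact hx₁ (by simpa using L₁.sub_mem h hy₁)
          · intro h
            exact hy₂ (by simpa using L₂.sub_mem h hx₂)
        · exact ⟨y, hy₃, hy₁, hy₂⟩
      · exact ⟨x, hx₃, hx₁, hx₂⟩
    -- find u ∈ L₁ outside U₂ := L₂ ⊔ span {v₀}
    set U₂ := L₂ ⊔ Submodule.span k {v₀} with hU₂def
    have hU₂fr : finrank k ↥U₂ ≤ r + 1 := by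
      have e := Submodule.finrank_sup_add_finrank_inf_eq L₂ (Submodule.span k {v₀})
      rw [← hU₂def] at e
      have hs : finrank k ↥(Submodule.span k ({v₀} : Set V)) = 1 :=
        finrank_span_singleton (fun h => hv₀₁ (h ▸ L₁.zero_mem))
      omega
    obtain ⟨u, hu₁, huU⟩ : ∃ u ∈ L₁, u ∉ U₂ := by
      have e1 := Submodule.finrank_sup_add_finrank_inf_eq L₁ L₂
      rw [← hNdef] at e1
      have e2 := Submodule.finrank_sup_add_finrank_inf_eq L₁ U₂
      have hmono : finrank k ↥(L₁ ⊔ L₂) ≤ finrank k ↥(L₁ ⊔ U₂) :=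
        Submodule.finrank_mono (sup_le_sup_left le_sup_left _)
      have hlt : finrank k ↥(L₁ ⊓ U₂) < r := by omega
      by_contra hno
      push_neg at hno
      have hsub : L₁ ≤ U₂ := fun z hz => hno z hz
      have heq : L₁ ⊓ U₂ = L₁ := inf_eq_left.2 hsub
      rw [heq, hr₁] at hlt
      omega
    obtain ⟨f, hfu, hfU⟩ := exists_dual_fun huU
    obtain ⟨m, rfl⟩ : ∃ m, r = m + 1 := ⟨r - 1, by omega⟩
    -- K := L₁ ⊓ ker f has dimension m
    set K := L₁ ⊓ LinearMap.ker f with hKdef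
    have hfr_K : finrank k ↥K = m := by
      set f' : L₁ →ₗ[k] k := f.comp L₁.subtype with hf'def
      have hrange : LinearMap.range f' = ⊤ := by
        rw [Submodule.eq_top_iff']
        intro c
        refine ⟨c • ⟨u, hu₁⟩, ?_⟩
        show f (c • u) = c
        rw [map_smul, hfu, smul_eq_mul, mul_one]
      have hrn := LinearMap.finrank_range_add_finrank_ker f'
      rw [hrange, finrank_top, Module.finrank_self] at hrn
      have hker : LinearMap.ker f' = K.comap L₁.subtype := by
        ext w
        simp only [LinearMap.mem_ker, Submodule.mem_comap, hKdef, Submodule.mem_inf,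
          Submodule.coe_subtype]
        constructor
        · intro h
          exact ⟨w.2, by simpa [hf'def] using h⟩
        · intro h
          simpa [hf'def] using h.2
      have hfe : finrank k ↥(K.comap L₁.subtype) = finrank k ↥K :=
        (Submodule.comapSubtypeEquivOfLe (inf_le_left : K ≤ L₁)).finrank_eq
      rw [hker, hfe, hr₁] at hrn
      omega
    let bK := Module.finBasisOfFinrankEq k K hfr_K
    obtain ⟨hz_ind, hz_span⟩ := basis_family bK
    set z : Fin m → V := fun i => (bK i : V) with hzdef
    have hKL₁ : K ≤ L₁ := inf_le_left
    have hfz : ∀ i, f (z i) = 0 := by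
      intro i
      have hmem : (bK i : V) ∈ L₁ ⊓ LinearMap.ker f := (bK i).2
      simpa using (Submodule.mem_inf.1 hmem).2
    have huz : u ∉ Submodule.span k (Set.range z) := by
      rw [hz_span]
      intro h
      have hmem : u ∈ L₁ ⊓ LinearMap.ker f := h
      have : f u = 0 := by simpa using (Submodule.mem_inf.1 hmem).2
      rw [hfu] at this
      exact one_ne_zero this
    set t : Fin (m+1) → V := Fin.cons u z with htdef
    have ht_ind : LinearIndependent k t := linearIndependent_fin_cons.2 ⟨hz_ind, huz⟩
    have ht_mem : ∀ i, t i ∈ L₁ := by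
      intro i
      refine Fin.cases ?_ ?_ i
      · exact hu₁
      · intro j
        have : z j ∈ K := hz_span ▸ Submodule.subset_span ⟨j, rfl⟩
        exact hKL₁ this
    have ht_span := span_eq_of_le ht_ind ht_mem hr₁
    obtain ⟨c₁, hc₁, hpl₁⟩ := pluecker_eq_smul_ιMulti ht_ind ht_span
    have hctrω₁ : ctr f ω₁ = c₁ • ExteriorAlgebra.ιMulti k m z := by
      rw [hω₁def, hpl₁, map_smul, htdef, ιMulti_cons, ctr_ι_mul, hfu, one_smul,
        ctr_kill f z hfz, mul_zero, sub_zero]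
    have hctrω₂ : ctr f ω₂ = 0 :=
      ctr_pluecker_eq_zero hr₂ f (fun y' hy' => hfU y' ((le_sup_left : L₂ ≤ U₂) hy'))
    have hfv₀ : f v₀ = 0 := hfU v₀ ((le_sup_right : Submodule.span k {v₀} ≤ U₂)
      (Submodule.mem_span_singleton_self v₀))
    have hC := congrArg (ctr f) (hv3 v₀ hv₀₃)
    rw [map_zero, map_add, ctr_ι_mul, ctr_ι_mul, hctrω₁, hctrω₂, hfv₀, zero_smul, zero_smul,
      mul_zero, sub_zero, zero_sub, add_zero, neg_eq_zero, mul_smul_comm] at hC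
    have hz0 : ExteriorAlgebra.ι k v₀ * ExteriorAlgebra.ιMulti k m z = 0 :=
      (smul_eq_zero_iff_right hc₁).1 hC
    have : v₀ ∈ K := by
      rw [← hz_span]
      exact (ι_mul_ιMulti_eq_zero_iff hz_ind v₀).1 hz0
    exact hv₀₁ (hKL₁ this)
  refine ⟨by omega, ?_⟩
  ext L
  simp only [Set.mem_setOf_eq]
  constructor
  · intro hL
    exact ⟨(hforward L hL).1, (hforward L hL).2, hX L hL⟩
  · rintro ⟨hNL, hLU, hrL⟩
    obtain ⟨m, rfl⟩ : ∃ m, r = m + 1 := ⟨r - 1, by omega⟩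
    have hfrN : finrank k ↥N = m := by omega
    obtain ⟨p, hp₁, hpN⟩ := SetLike.not_le_iff_exists.1
      (show ¬ L₁ ≤ N from fun h => hNne (le_antisymm inf_le_left h))
    obtain ⟨q, hq₂, hqN⟩ := SetLike.not_le_iff_exists.1
      (show ¬ L₂ ≤ N from fun h => hNne₂ (le_antisymm inf_le_right h))
    obtain ⟨x, hxL, hxN⟩ := SetLike.not_le_iff_exists.1
      (show ¬ L ≤ N from fun h => by
        have := Submodule.finrank_mono h
        omega)
    let bN := Module.finBasisOfFinrankEq k N hfrN
    obtain ⟨hz_ind, hz_span⟩ := basis_family bN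
    set z : Fin m → V := fun i => (bN i : V) with hzdef
    have hzN : ∀ j, z j ∈ N := fun j => hz_span ▸ Submodule.subset_span ⟨j, rfl⟩
    -- L₁ in terms of p and z
    have hp_ind : LinearIndependent k (Fin.cons p z : Fin (m+1) → V) :=
      linearIndependent_fin_cons.2 ⟨hz_ind, by rw [hz_span]; exact hpN⟩
    have hp_mem : ∀ i, (Fin.cons p z : Fin (m+1) → V) i ∈ L₁ := by
      intro i
      refine Fin.cases ?_ ?_ i
      · exact hp₁
      · exact fun j => (inf_le_left : N ≤ L₁) (hzN j)
    have hp_span := span_eq_of_le hp_ind hp_mem hr₁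
    obtain ⟨c₁, hc₁, hpl₁⟩ := pluecker_eq_smul_ιMulti hp_ind hp_span
    -- L₂ in terms of q and z
    have hq_ind : LinearIndependent k (Fin.cons q z : Fin (m+1) → V) :=
      linearIndependent_fin_cons.2 ⟨hz_ind, by rw [hz_span]; exact hqN⟩
    have hq_mem : ∀ i, (Fin.cons q z : Fin (m+1) → V) i ∈ L₂ := by
      intro i
      refine Fin.cases ?_ ?_ i
      · exact hq₂
      · exact fun j => (inf_le_right : N ≤ L₂) (hzN j)
    have hq_span := span_eq_of_le hq_ind hq_mem hr₂
    obtain ⟨c₂, hc₂, hpl₂⟩ := pluecker_eq_smul_ιMulti hq_ind hq_span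
    -- decompose x
    have hx_mem : x ∈ L₁ ⊔ L₂ := hLU hxL
    rw [Submodule.mem_sup] at hx_mem
    obtain ⟨x₁, hx₁, x₂, hx₂, hxeq⟩ := hx_mem
    -- L₁ = span{p} ⊔ N and L₂ = span{q} ⊔ N
    have hL₁eq : L₁ = Submodule.span k {p} ⊔ N := by
      rw [← hp_span, Fin.range_cons, Submodule.span_insert, hz_span]
    have hL₂eq : L₂ = Submodule.span k {q} ⊔ N := by
      rw [← hq_span, Fin.range_cons, Submodule.span_insert, hz_span]
    rw [hL₁eq, Submodule.mem_sup] at hx₁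
    obtain ⟨yp, hyp, n₁, hn₁, hx₁eq⟩ := hx₁
    obtain ⟨a, rfl⟩ := Submodule.mem_span_singleton.1 hyp
    rw [hL₂eq, Submodule.mem_sup] at hx₂
    obtain ⟨yq, hyq, n₂, hn₂, hx₂eq⟩ := hx₂
    obtain ⟨b, rfl⟩ := Submodule.mem_span_singleton.1 hyq
    set y := a • p + b • q with hydef
    have hxy : x = y + (n₁ + n₂) := by
      rw [← hxeq, ← hx₁eq, ← hx₂eq, hydef]
      abel
    have hyL : y ∈ L := by
      have h12' : (n₁ + n₂ : V) ∈ L := L.add_mem (hNL hn₁) (hNL hn₂)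
      have : y = x - (n₁ + n₂) := by rw [hxy]; abel
      rw [this]
      exact L.sub_mem hxL h12'
    have hyN : y ∉ N := by
      intro h
      apply hxN
      rw [hxy]
      exact N.add_mem h (N.add_mem hn₁ hn₂)
    -- L in terms of y and z
    have hy_ind : LinearIndependent k (Fin.cons y z : Fin (m+1) → V) :=
      linearIndependent_fin_cons.2 ⟨hz_ind, by rw [hz_span]; exact hyN⟩
    have hy_mem : ∀ i, (Fin.cons y z : Fin (m+1) → V) i ∈ L := by
      intro i
      refine Fin.cases ?_ ?_ i
      · exact hyL
      · exact fun j => hNL (hzN j)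
    have hy_span := span_eq_of_le hy_ind hy_mem hrL
    obtain ⟨c₃, hc₃, hpl₃⟩ := pluecker_eq_smul_ιMulti hy_ind hy_span
    -- expand the Plücker vector of L
    have h1 : ExteriorAlgebra.ιMulti k (m+1) (Fin.cons p z) = c₁⁻¹ • ω₁ := by
      rw [hω₁def, hpl₁, smul_smul, inv_mul_cancel₀ hc₁, one_smul]
    have h2 : ExteriorAlgebra.ιMulti k (m+1) (Fin.cons q z) = c₂⁻¹ • ω₂ := by
      rw [hω₂def, hpl₂, smul_smul, inv_mul_cancel₀ hc₂, one_smul]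
    have hexp : ExteriorAlgebra.ιMulti k (m+1) (Fin.cons y z)
        = a • (c₁⁻¹ • ω₁) + b • (c₂⁻¹ • ω₂) := by
      rw [← h1, ← h2, ιMulti_cons, ιMulti_cons, ιMulti_cons, hydef, map_add, map_smul,
        map_smul, add_mul, smul_mul_assoc, smul_mul_assoc]
    have hplW : plueckerVec (m+1) L ∈ W := by
      rw [hpl₃, hexp]
      exact W.smul_mem _ (W.add_mem (W.smul_mem _ (W.smul_mem _ (hWmem _ h₁)))
        (W.smul_mem _ (W.smul_mem _ (hWmem _ h₂))))
    obtain ⟨L', hL'X, c', hc', hplL'⟩ := hWsurj _ hplW (pluecker_ne_zero hrL)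
    rwa [pluecker_inj hrL (hX L' hL'X) hc' hplL'] at hL'X


/-- Let `X` be a set of `r`-dimensional subspaces of `V` whose Plücker image is a
projective line in `ℙ(Λ^r V)` (the projectivization of a `2`-dimensional subspace `W` of
`Λ^r V`), and let `L₁ ≠ L₂` be two points of `X`.  Then
`X = {L : L₁∩L₂ ⊆ L ⊆ L₁+L₂, dim L = r} = Grass¹((L₁+L₂)/(L₁∩L₂))`, and the subspaces
`L₁+L₂` and `L₁∩L₂` do not depend on the choice of the two distinct points of `X`. -/
theorem line_in_grassmannian {k V : Type*} [Field k] [AddCommGroup V] [Module k V]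
    [FiniteDimensional k V] (r : ℕ) (hr : 1 ≤ r) (X : Set (Submodule k V))
    (hX : ∀ L ∈ X, finrank k ↥L = r)
    (hline : ∃ W : Submodule k (ExteriorAlgebra k V), finrank k ↥W = 2 ∧
      W ≤ ⋀[k]^r V ∧ (∀ L ∈ X, plueckerVec r L ∈ W) ∧
      (∀ w ∈ W, w ≠ 0 → ∃ L ∈ X, ∃ c : k, c ≠ 0 ∧ plueckerVec r L = c • w))
    (L₁ L₂ : Submodule k V) (h₁ : L₁ ∈ X) (h₂ : L₂ ∈ X) (h12 : L₁ ≠ L₂) :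
    X = {L : Submodule k V | L₁ ⊓ L₂ ≤ L ∧ L ≤ L₁ ⊔ L₂ ∧ finrank k ↥L = r} ∧
    (∀ M₁ ∈ X, ∀ M₂ ∈ X, M₁ ≠ M₂ → M₁ ⊔ M₂ = L₁ ⊔ L₂ ∧ M₁ ⊓ M₂ = L₁ ⊓ L₂) := by
  obtain ⟨hdim, hset⟩ := core r hr X hX hline L₁ L₂ h₁ h₂ h12
  refine ⟨hset, ?_⟩
  intro M₁ hM₁ M₂ hM₂ hMne
  obtain ⟨hdim', -⟩ := core r hr X hX hline M₁ M₂ hM₁ hM₂ hMne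
  rw [hset] at hM₁ hM₂
  obtain ⟨hN1, hU1, hr1⟩ := hM₁
  obtain ⟨hN2, hU2, hr2⟩ := hM₂
  have hr₁ : finrank k ↥L₁ = r := hX L₁ h₁
  have hr₂ : finrank k ↥L₂ = r := hX L₂ h₂
  have e1 := Submodule.finrank_sup_add_finrank_inf_eq L₁ L₂
  have e2 := Submodule.finrank_sup_add_finrank_inf_eq M₁ M₂
  constructor
  · exact Submodule.eq_of_le_of_finrank_le (sup_le hU1 hU2) (by omega)
  · exact (Submodule.eq_of_le_of_finrank_le (le_inf hN1 hN2) (by omega)).symm
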